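/- Let G be a finite simple graph on vertex set {1,…,n}, let (O_α)_{α=1}^n be the Pauli representation of the commutation relations of G, let S be an independent set of G, and let K_α ≥ 0 be nonnegative reals for α ∈ S. Then the operator norm satisfies ‖Σ_{α∈S} K_α O_α‖ = Σ_{α∈S} K_α. In particular, for positive weights m_α and w := Σ_{α∈S} m_α, the choice K_α = m_α/√w satisfies Σ_{α∈S} K_α²/m_α = 1 and ‖Σ_{α∈S} K_α O_α‖² = w, so the weighted Ψ function of G is bounded below by the maximum weight of an independent set of G. -/

import Mathlib

open scoped BigOperators


/-- Pauli X matrix. -/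
def pauliX : Matrix (Fin 2) (Fin 2) ℂ := !![0, 1; 1, 0]

/-- Pauli Z matrix. -/
def pauliZ : Matrix (Fin 2) (Fin 2) ℂ := !![1, 0; 0, -1]

open Classical in
/-- The Pauli representation of the commutation relations of a graph `G` on `{1,…,n}`:
`O_α = P₁ ⊗ ⋯ ⊗ Pₙ` where `P_α = X`, `P_β = Z` for `β < α` adjacent to `α`, and `P_β = I`
otherwise.  Here `ℂ^{2^n}` is realized as functions `Fin n → Fin 2`, and the Kronecker
product of the `2×2` factors is the matrix whose `(f, g)` entry is the product of the
entries of the factors. -/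
noncomputable def pauliRep {n : ℕ} (G : SimpleGraph (Fin n)) (α : Fin n) :
    Matrix (Fin n → Fin 2) (Fin n → Fin 2) ℂ :=
  Matrix.of fun f g => ∏ i,
    (if i = α then pauliX else if i < α ∧ G.Adj i α then pauliZ else 1) (f i) (g i)

/-- The operator norm of a complex matrix acting on ℂ^d with the standard Hermitian
inner product. -/
noncomputable def matOpNorm {m : Type*} [Fintype m] [DecidableEq m] (M : Matrix m m ℂ) : ℝ :=
  ‖Matrix.toEuclideanCLM (𝕜 := ℂ) M‖


lemma kron_mul {n : ℕ} (P Q : Fin n → Matrix (Fin 2) (Fin 2) ℂ) :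
    (Matrix.of fun f g : Fin n → Fin 2 => ∏ i, P i (f i) (g i)) *
      (Matrix.of fun f g : Fin n → Fin 2 => ∏ i, Q i (f i) (g i))
      = Matrix.of fun f g : Fin n → Fin 2 => ∏ i, (P i * Q i) (f i) (g i) := by
  ext f h
  simp only [Matrix.mul_apply, Matrix.of_apply]
  calc ∑ g : Fin n → Fin 2, (∏ i, P i (f i) (g i)) * ∏ i, Q i (g i) (h i)
      = ∑ g : Fin n → Fin 2, ∏ i, (P i (f i) (g i) * Q i (g i) (h i)) := by
        simp [Finset.prod_mul_distrib]
    _ = ∏ i, ∑ b, P i (f i) b * Q i b (h i) := by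
        rw [Finset.prod_univ_sum (fun _ => (Finset.univ : Finset (Fin 2)))
          (fun i b => P i (f i) b * Q i b (h i)), Fintype.piFinset_univ]
    _ = ∏ i, (P i * Q i) (f i) (h i) := by simp [Matrix.mul_apply]

lemma kron_one {n : ℕ} :
    (Matrix.of fun f g : Fin n → Fin 2 => ∏ i, (1 : Matrix (Fin 2) (Fin 2) ℂ) (f i) (g i)) = 1 := by
  ext f g
  simp only [Matrix.of_apply, Matrix.one_apply]
  simp [Finset.prod_boole, funext_iff, eq_comm]

lemma pauliX_sq : pauliX * pauliX = 1 := by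
  ext i j; fin_cases i <;> fin_cases j <;>
    simp [pauliX, Matrix.mul_apply, Fin.sum_univ_two, Matrix.one_apply]

lemma pauliZ_sq : pauliZ * pauliZ = 1 := by
  ext i j; fin_cases i <;> fin_cases j <;>
    simp [pauliZ, Matrix.mul_apply, Fin.sum_univ_two, Matrix.one_apply]

lemma pauliX_herm : pauliX.conjTranspose = pauliX := by
  ext i j; fin_cases i <;> fin_cases j <;> simp [pauliX]

lemma pauliZ_herm : pauliZ.conjTranspose = pauliZ := by
  ext i j; fin_cases i <;> fin_cases j <;> simp [pauliZ]

open Classical in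
noncomputable def pauliFactor {n : ℕ} (G : SimpleGraph (Fin n)) (α i : Fin n) :
    Matrix (Fin 2) (Fin 2) ℂ :=
  if i = α then pauliX else if i < α ∧ G.Adj i α then pauliZ else 1

noncomputable def pauliRep' {n : ℕ} (G : SimpleGraph (Fin n)) (α : Fin n) :
    Matrix (Fin n → Fin 2) (Fin n → Fin 2) ℂ :=
  Matrix.of fun f g => ∏ i, pauliFactor G α i (f i) (g i)

lemma pauliFactor_sq {n : ℕ} (G : SimpleGraph (Fin n)) (α i : Fin n) :
    pauliFactor G α i * pauliFactor G α i = 1 := by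
  unfold pauliFactor; split_ifs <;> simp [pauliX_sq, pauliZ_sq]

lemma pauliFactor_herm {n : ℕ} (G : SimpleGraph (Fin n)) (α i : Fin n) :
    (pauliFactor G α i).conjTranspose = pauliFactor G α i := by
  unfold pauliFactor; split_ifs <;> simp [pauliX_herm, pauliZ_herm]

lemma pauliRep'_herm {n : ℕ} (G : SimpleGraph (Fin n)) (α : Fin n) :
    (pauliRep' G α).conjTranspose = pauliRep' G α := by
  ext f g
  simp only [pauliRep', Matrix.conjTranspose_apply, Matrix.of_apply, star_prod]
  refine Finset.prod_congr rfl fun i _ => ?_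
  conv_rhs => rw [← pauliFactor_herm G α i]
  simp [Matrix.conjTranspose_apply]

lemma pauliRep'_unitary {n : ℕ} (G : SimpleGraph (Fin n)) (α : Fin n) :
    pauliRep' G α ∈ unitary (Matrix (Fin n → Fin 2) (Fin n → Fin 2) ℂ) := by
  have hm : pauliRep' G α * pauliRep' G α = 1 := by
    unfold pauliRep'
    rw [kron_mul]
    simp only [pauliFactor_sq]
    exact kron_one
  constructor <;>
    simp [Matrix.star_eq_conjTranspose, pauliRep'_herm, hm]

lemma kron_mulVec {n : ℕ} (P : Fin n → Matrix (Fin 2) (Fin 2) ℂ) (w : Fin n → Fin 2 → ℂ) :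
    (Matrix.of fun f g : Fin n → Fin 2 => ∏ i, P i (f i) (g i)).mulVec
        (fun f => ∏ i, w i (f i))
      = fun f => ∏ i, (P i |>.mulVec (w i)) (f i) := by
  funext f
  simp only [Matrix.mulVec, dotProduct, Matrix.of_apply]
  calc ∑ g : Fin n → Fin 2, (∏ i, P i (f i) (g i)) * ∏ i, w i (g i)
      = ∑ g : Fin n → Fin 2, ∏ i, (P i (f i) (g i) * w i (g i)) := by
        simp [Finset.prod_mul_distrib]
    _ = ∏ i, ∑ b, P i (f i) b * w i b := by
        rw [Finset.prod_univ_sum (fun _ => (Finset.univ : Finset (Fin 2)))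
          (fun i b => P i (f i) b * w i b), Fintype.piFinset_univ]

lemma pauliFactor_mulVec {n : ℕ} (G : SimpleGraph (Fin n)) (S : Finset (Fin n))
    (hS : ∀ a ∈ S, ∀ b ∈ S, ¬ G.Adj a b) {α : Fin n} (hα : α ∈ S) (i : Fin n) :
    (pauliFactor G α i).mulVec (fun b => if i ∈ S ∨ b = 0 then 1 else 0)
      = fun b => if i ∈ S ∨ b = 0 then 1 else 0 := by
  unfold pauliFactor
  split_ifs with h1 h2
  · subst h1
    funext b
    fin_cases b <;>
      simp [pauliX, Matrix.mulVec, dotProduct, Fin.sum_univ_two, hα]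
  · have hiS : i ∉ S := fun hi => hS i hi α hα h2.2
    funext b
    fin_cases b <;>
      simp [pauliZ, Matrix.mulVec, dotProduct, Fin.sum_univ_two, hiS]
  · simp

lemma pauliRep'_mulVec {n : ℕ} (G : SimpleGraph (Fin n)) (S : Finset (Fin n))
    (hS : ∀ a ∈ S, ∀ b ∈ S, ¬ G.Adj a b) {α : Fin n} (hα : α ∈ S) :
    (pauliRep' G α).mulVec (fun f => ∏ i, if i ∈ S ∨ f i = 0 then 1 else 0)
      = fun f => ∏ i, if i ∈ S ∨ f i = 0 then 1 else 0 := by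
  have := kron_mulVec (fun i => pauliFactor G α i)
    (fun i b => if i ∈ S ∨ b = 0 then 1 else 0)
  unfold pauliRep'
  rw [this]
  funext f
  refine Finset.prod_congr rfl fun i _ => ?_
  rw [pauliFactor_mulVec G S hS hα i]

noncomputable def matOpNorm' {m : Type*} [Fintype m] [DecidableEq m] (M : Matrix m m ℂ) : ℝ :=
  ‖Matrix.toEuclideanCLM (𝕜 := ℂ) M‖

set_option maxHeartbeats 1000000 in
set_option synthInstance.maxHeartbeats 400000 in
lemma main1 {n : ℕ} (G : SimpleGraph (Fin n)) (S : Finset (Fin n))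
    (hS : ∀ a ∈ S, ∀ b ∈ S, ¬ G.Adj a b) (K : Fin n → ℝ) (hK : ∀ α ∈ S, 0 ≤ K α) :
    matOpNorm' (∑ α ∈ S, (K α : ℂ) • pauliRep' G α) = ∑ α ∈ S, K α := by
  classical
  set φ := Matrix.toEuclideanCLM (𝕜 := ℂ) (n := Fin n → Fin 2)
  -- the fixed vector
  set x : (Fin n → Fin 2) → ℂ := fun f => ∏ i, if i ∈ S ∨ f i = 0 then 1 else 0 with hx
  set v : EuclideanSpace ℂ (Fin n → Fin 2) := (WithLp.equiv 2 _).symm x with hv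
  have hx0 : x (fun _ => 0) = 1 := by simp [hx]
  have hvne : v ≠ 0 := by
    intro h
    have : x (fun _ => 0) = 0 := by
      have := congrFun (congrArg (WithLp.equiv 2 _) h) (fun _ => 0)
      simpa [hv] using this
    rw [hx0] at this; exact one_ne_zero this
  have hvnorm : 0 < ‖v‖ := norm_pos_iff.mpr hvne
  -- upper bound
  haveI : Nontrivial (EuclideanSpace ℂ (Fin n → Fin 2)) := nontrivial_of_ne v 0 hvne
  have hub : ‖φ (∑ α ∈ S, (K α : ℂ) • pauliRep' G α)‖ ≤ ∑ α ∈ S, K α := by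
    rw [map_sum]
    refine (norm_sum_le _ _).trans_eq (Finset.sum_congr rfl fun α hα => ?_)
    rw [map_smul, norm_smul ((K α : ℂ)) (φ (pauliRep' G α))]
    have h1 : ‖φ (pauliRep' G α)‖ = 1 :=
      CStarRing.norm_of_mem_unitary (Unitary.map_mem (f := φ) (pauliRep'_unitary G α))
    simp [h1, Complex.norm_real, abs_of_nonneg (hK α hα)]
  -- lower bound
  have hMv : φ (∑ α ∈ S, (K α : ℂ) • pauliRep' G α) v = ((∑ α ∈ S, K α : ℝ) : ℂ) • v := by
    rw [hv, WithLp.equiv_symm_apply, Matrix.toEuclideanCLM_toLp]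
    have : (∑ α ∈ S, (K α : ℂ) • pauliRep' G α).mulVec x = ((∑ α ∈ S, K α : ℝ) : ℂ) • x := by
      rw [show (∑ α ∈ S, (K α : ℂ) • pauliRep' G α).mulVec x
          = ∑ α ∈ S, ((K α : ℂ) • pauliRep' G α).mulVec x by
        rw [← Matrix.toLin'_apply, map_sum, LinearMap.sum_apply]
        simp [Matrix.toLin'_apply]]
      have : ∀ α ∈ S, ((K α : ℂ) • pauliRep' G α).mulVec x = (K α : ℂ) • x := by
        intro α hα
        rw [Matrix.smul_mulVec, pauliRep'_mulVec G S hS hα]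
      rw [Finset.sum_congr rfl this, ← Finset.sum_smul]
      push_cast
      rfl
    rw [this]
    simp
  have hlb : ∑ α ∈ S, K α ≤ ‖φ (∑ α ∈ S, (K α : ℂ) • pauliRep' G α)‖ := by
    have := (φ (∑ α ∈ S, (K α : ℂ) • pauliRep' G α)).le_opNorm v
    rw [hMv, norm_smul] at this
    have hKnn : 0 ≤ ∑ α ∈ S, K α := Finset.sum_nonneg hK
    rw [Complex.norm_real, Real.norm_eq_abs, abs_of_nonneg hKnn] at this
    exact le_of_mul_le_mul_right (by linarith) hvnorm
  exact le_antisymm hub hlb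

theorem stmt12 {n : ℕ} (G : SimpleGraph (Fin n)) (S : Finset (Fin n))
    (hS : ∀ a ∈ S, ∀ b ∈ S, ¬ G.Adj a b) :
    (∀ K : Fin n → ℝ, (∀ α ∈ S, 0 ≤ K α) →
      matOpNorm (∑ α ∈ S, (K α : ℂ) • pauliRep G α) = ∑ α ∈ S, K α) ∧
    -- In particular, for positive weights m_α and w := Σ_{α∈S} m_α, the choice
    -- K_α = m_α/√w satisfies Σ_{α∈S} K_α²/m_α = 1 and ‖Σ_{α∈S} K_α O_α‖² = w.
    (∀ m : Fin n → ℝ, (∀ α ∈ S, 0 < m α) → S.Nonempty →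
      (∑ α ∈ S, (m α / Real.sqrt (∑ β ∈ S, m β)) ^ 2 / m α = 1) ∧
      matOpNorm (∑ α ∈ S, ((m α / Real.sqrt (∑ β ∈ S, m β) : ℝ) : ℂ) • pauliRep G α) ^ 2
        = ∑ β ∈ S, m β) := by
  have hrep : pauliRep G = pauliRep' G := rfl
  have part1 : ∀ K : Fin n → ℝ, (∀ α ∈ S, 0 ≤ K α) →
      matOpNorm (∑ α ∈ S, (K α : ℂ) • pauliRep G α) = ∑ α ∈ S, K α := by
    intro K hK
    rw [hrep]
    exact main1 G S hS K hK
  refine ⟨part1, ?_⟩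
  intro m hm hne
  have hwpos : 0 < ∑ β ∈ S, m β := Finset.sum_pos (fun α hα => hm α hα) hne
  have hsqpos : 0 < Real.sqrt (∑ β ∈ S, m β) := Real.sqrt_pos.mpr hwpos
  constructor
  · have : ∀ α ∈ S, (m α / Real.sqrt (∑ β ∈ S, m β)) ^ 2 / m α = m α / (∑ β ∈ S, m β) := by
      intro α hα
      rw [div_pow, Real.sq_sqrt hwpos.le, div_div, sq]
      rw [mul_comm (∑ β ∈ S, m β) (m α), ← div_div, mul_div_assoc,
        div_self (hm α hα).ne', mul_one]
    rw [Finset.sum_congr rfl this, ← Finset.sum_div, div_self hwpos.ne']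
  · rw [part1 _ (fun α hα => div_nonneg (hm α hα).le hsqpos.le), ← Finset.sum_div,
      Real.div_sqrt, Real.sq_sqrt hwpos.le]
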